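/- If A ⊆ B(H) is a von Neumann algebra, then its infinite amplification A^∞ = {A^∞ : A ∈ A} ⊆ B(H^∞) is reflexive: A^∞ = Alg(Lat(A^∞)). -/

import Mathlib

open ContinuousLinearMap

noncomputable section

/-- The lattice of invariant projections of a set of operators. -/
def latSet {E : Type*} [NormedAddCommGroup E] [InnerProductSpace ℂ E] [CompleteSpace E]
    (𝒜 : Set (E →L[ℂ] E)) : Set (E →L[ℂ] E) :=
  {L | IsSelfAdjoint L ∧ IsIdempotentElem L ∧ ∀ A ∈ 𝒜, (1 - L) ∘L A ∘L L = 0}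

/-- The algebra of operators leaving invariant each projection in a set. -/
def algSet {E : Type*} [NormedAddCommGroup E] [InnerProductSpace ℂ E] [CompleteSpace E]
    (𝓛 : Set (E →L[ℂ] E)) : Set (E →L[ℂ] E) :=
  {A | ∀ L ∈ 𝓛, (1 - L) ∘L A ∘L L = 0}

section Aux

set_option linter.unusedSectionVars false

variable {E : Type*} [NormedAddCommGroup E] [InnerProductSpace ℂ E] [CompleteSpace E]

/-- The orthogonal projection onto a complete submodule, as an endomorphism. -/
def projCLM (K : Submodule ℂ E) [CompleteSpace K] : E →L[ℂ] E :=
  K.subtypeL ∘L Submodule.orthogonalProjection K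

lemma projCLM_apply_mem (K : Submodule ℂ E) [CompleteSpace K] (x : E) : projCLM K x ∈ K :=
  (Submodule.orthogonalProjection K x).2

lemma projCLM_eq_self (K : Submodule ℂ E) [CompleteSpace K] {x : E} (hx : x ∈ K) :
    projCLM K x = x := by
  have h := Submodule.orthogonalProjection_mem_subspace_eq_self (K := K) ⟨x, hx⟩
  simp only [projCLM, comp_apply]
  rw [h]; rfl

lemma projCLM_mem_latSet (𝒮 : Set (E →L[ℂ] E)) (K : Submodule ℂ E) [CompleteSpace K]
    (hinv : ∀ S ∈ 𝒮, ∀ x ∈ K, S x ∈ K) : projCLM K ∈ latSet 𝒮 := by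
  refine ⟨isSelfAdjoint_starProjection K, ?_, ?_⟩
  · ext x
    exact projCLM_eq_self K (projCLM_apply_mem K x)
  · intro S hS
    ext x
    have h1 : S (projCLM K x) ∈ K := hinv S hS _ (projCLM_apply_mem K x)
    simp only [comp_apply, sub_apply, one_apply_eq_self, zero_apply]
    rw [projCLM_eq_self K h1, sub_self]

lemma mem_of_inv (K : Submodule ℂ E) [CompleteSpace K] (T : E →L[ℂ] E)
    (h : (1 - projCLM K) ∘L T ∘L projCLM K = 0) {x : E} (hx : x ∈ K) : T x ∈ K := by
  have h2 := congrArg (fun S : E →L[ℂ] E => S x) h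
  simp only [comp_apply, sub_apply, one_apply_eq_self, zero_apply, projCLM_eq_self K hx,
    sub_eq_zero] at h2
  rw [h2]
  exact projCLM_apply_mem K _

end Aux

section LpAux

set_option linter.unusedSectionVars false

variable {H : Type*} [NormedAddCommGroup H] [InnerProductSpace ℂ H] [CompleteSpace H]

/-- Evaluation at a coordinate, as a continuous linear map. -/
def evalCLM (n : ℕ) : lp (fun _ : ℕ => H) 2 →L[ℂ] H :=
  LinearMap.mkContinuous
    { toFun := fun x => x n
      map_add' := fun x y => by simp
      map_smul' := fun c x => by simp }
    1 (fun x => by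
      rw [one_mul]
      exact lp.norm_apply_le_norm (by norm_num) x n)

@[simp] lemma evalCLM_apply (n : ℕ) (x : lp (fun _ : ℕ => H) 2) :
    evalCLM n x = (x : ∀ _ : ℕ, H) n := rfl

lemma single_add' (j : ℕ) (a b : H) :
    lp.single 2 j (a + b) = (lp.single 2 j a : lp (fun _ : ℕ => H) 2) + lp.single 2 j b := by
  apply lp.ext
  funext n
  by_cases h : n = j
  · subst h
    simp [lp.single_apply_self]
  · simp [lp.single_apply_ne _ _ _ h]

/-- Inclusion at a coordinate, as a continuous linear map. -/
def singleCLM (j : ℕ) : H →L[ℂ] lp (fun _ : ℕ => H) 2 :=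
  LinearMap.mkContinuous
    { toFun := fun a => lp.single 2 j a
      map_add' := fun a b => single_add' j a b
      map_smul' := fun c a => by simp }
    1 (fun a => by
      rw [one_mul]
      exact le_of_eq (lp.norm_single (E := fun _ : ℕ => H) (p := 2) (by norm_num) j a))

@[simp] lemma singleCLM_apply (j : ℕ) (a : H) :
    singleCLM j a = (lp.single 2 j a : lp (fun _ : ℕ => H) 2) := rfl

lemma memℓp_comp (B : H →L[ℂ] H) (x : lp (fun _ : ℕ => H) 2) :
    Memℓp (fun n => B ((x : ∀ _ : ℕ, H) n)) 2 := by
  apply memℓp_gen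
  have hx := (lp.memℓp x).summable (p := 2) (by norm_num)
  refine Summable.of_nonneg_of_le (fun n => Real.rpow_nonneg (norm_nonneg _) _)
    (fun n => ?_) (hx.mul_left (‖B‖ ^ ENNReal.toReal 2))
  rw [← Real.mul_rpow (norm_nonneg _) (norm_nonneg _)]
  exact Real.rpow_le_rpow (norm_nonneg _) (B.le_opNorm _) (by norm_num)

lemma single_self (j : ℕ) (a : H) :
    ((lp.single 2 j a : lp (fun _ : ℕ => H) 2) : ∀ _ : ℕ, H) j = a :=
  lp.single_apply_self (E := fun _ : ℕ => H) 2 j a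

lemma single_ne {n j : ℕ} (h : n ≠ j) (a : H) :
    ((lp.single 2 j a : lp (fun _ : ℕ => H) 2) : ∀ _ : ℕ, H) n = 0 :=
  lp.single_apply_ne (E := fun _ : ℕ => H) 2 j a h

/-- The coordinate subspace at index `j`. -/
def coordSub (j : ℕ) : Submodule ℂ (lp (fun _ : ℕ => H) 2) where
  carrier := {x | ∀ n, n ≠ j → (x : ∀ _ : ℕ, H) n = 0}
  add_mem' := by
    intro a b ha hb n hn
    simp [lp.coeFn_add, ha n hn, hb n hn]
  zero_mem' := by
    intro n hn
    simp
  smul_mem' := by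
    intro c a ha n hn
    simp [lp.coeFn_smul, ha n hn]

lemma mem_coordSub {j : ℕ} {x : lp (fun _ : ℕ => H) 2} :
    x ∈ coordSub j ↔ ∀ n, n ≠ j → (x : ∀ _ : ℕ, H) n = 0 := Iff.rfl

lemma coordSub_closed (j : ℕ) :
    IsClosed ((coordSub j : Submodule ℂ (lp (fun _ : ℕ => H) 2)) : Set (lp (fun _ : ℕ => H) 2)) := by
  have h : ((coordSub j : Submodule ℂ (lp (fun _ : ℕ => H) 2)) : Set (lp (fun _ : ℕ => H) 2))
      = ⋂ n, {x : lp (fun _ : ℕ => H) 2 | n ≠ j → (x : ∀ _ : ℕ, H) n = 0} := by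
    ext x
    simp only [Set.mem_iInter, Set.mem_setOf_eq]
    exact mem_coordSub
  rw [h]
  refine isClosed_iInter fun n => ?_
  by_cases hn : n = j
  · simp [hn]
  · have h2 : {x : lp (fun _ : ℕ => H) 2 | n ≠ j → (x : ∀ _ : ℕ, H) n = 0}
        = (evalCLM (H := H) n) ⁻¹' {0} := by
      ext x
      simp [hn]
    rw [h2]
    exact isClosed_singleton.preimage (evalCLM n).continuous

/-- The graph-type subspace supported in coordinates `0` and `j`. -/
def graphSub (V : H →L[ℂ] H) (j : ℕ) : Submodule ℂ (lp (fun _ : ℕ => H) 2) where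
  carrier := {x | (x : ∀ _ : ℕ, H) j = V ((x : ∀ _ : ℕ, H) 0) ∧
      ∀ n, n ≠ 0 → n ≠ j → (x : ∀ _ : ℕ, H) n = 0}
  add_mem' := by
    rintro a b ⟨ha1, ha2⟩ ⟨hb1, hb2⟩
    refine ⟨?_, fun n hn0 hnj => ?_⟩
    · simp [lp.coeFn_add, ha1, hb1]
    · simp [lp.coeFn_add, ha2 n hn0 hnj, hb2 n hn0 hnj]
  zero_mem' := by
    refine ⟨by simp, fun n hn0 hnj => ?_⟩
    simp
  smul_mem' := by
    rintro c a ⟨ha1, ha2⟩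
    refine ⟨?_, fun n hn0 hnj => ?_⟩
    · simp [lp.coeFn_smul, ha1]
    · simp [lp.coeFn_smul, ha2 n hn0 hnj]

lemma mem_graphSub {V : H →L[ℂ] H} {j : ℕ} {x : lp (fun _ : ℕ => H) 2} :
    x ∈ graphSub V j ↔ (x : ∀ _ : ℕ, H) j = V ((x : ∀ _ : ℕ, H) 0) ∧
      ∀ n, n ≠ 0 → n ≠ j → (x : ∀ _ : ℕ, H) n = 0 := Iff.rfl

lemma graphSub_closed (V : H →L[ℂ] H) (j : ℕ) :
    IsClosed ((graphSub V j : Submodule ℂ (lp (fun _ : ℕ => H) 2)) :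
      Set (lp (fun _ : ℕ => H) 2)) := by
  have h : ((graphSub V j : Submodule ℂ (lp (fun _ : ℕ => H) 2)) : Set (lp (fun _ : ℕ => H) 2))
      = {x : lp (fun _ : ℕ => H) 2 | evalCLM j x = (V ∘L evalCLM 0) x} ∩
        ⋂ n, {x : lp (fun _ : ℕ => H) 2 | n ≠ 0 → n ≠ j → (x : ∀ _ : ℕ, H) n = 0} := by
    ext x
    simp only [Set.mem_inter_iff, Set.mem_iInter, Set.mem_setOf_eq, evalCLM_apply, comp_apply]
    exact mem_graphSub
  rw [h]
  refine IsClosed.inter (isClosed_eq (evalCLM j).continuous (V ∘L evalCLM 0).continuous) ?_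
  refine isClosed_iInter fun n => ?_
  by_cases hn0 : n = 0
  · simp [hn0]
  by_cases hnj : n = j
  · simp [hnj]
  have h2 : {x : lp (fun _ : ℕ => H) 2 | n ≠ 0 → n ≠ j → (x : ∀ _ : ℕ, H) n = 0}
      = (evalCLM (H := H) n) ⁻¹' {0} := by
    ext x
    simp [hn0, hnj]
  rw [h2]
  exact isClosed_singleton.preimage (evalCLM n).continuous

end LpAux

theorem stmt18
    {H : Type*} [NormedAddCommGroup H] [InnerProductSpace ℂ H] [CompleteSpace H]
    (𝒜 : VonNeumannAlgebra H)
    (𝒜inf : Set (lp (fun _ : ℕ => H) 2 →L[ℂ] lp (fun _ : ℕ => H) 2))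
    (hinf : 𝒜inf = {T | ∃ A ∈ 𝒜, ∀ (x : lp (fun _ : ℕ => H) 2) (n : ℕ),
      (T x : ∀ _ : ℕ, H) n = A ((x : ∀ _ : ℕ, H) n)}) :
    algSet (latSet 𝒜inf) = 𝒜inf := by
  apply Set.Subset.antisymm
  · intro T hT
    -- T leaves each coordinate subspace invariant
    have hKinv : ∀ j : ℕ, ∀ x ∈ coordSub (H := H) j, T x ∈ coordSub j := by
      intro j
      haveI := (coordSub_closed (H := H) j).completeSpace_coe
      intro x hx
      refine mem_of_inv _ T (hT _ (projCLM_mem_latSet _ _ ?_)) hx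
      intro S hS y hy n hn
      rw [hinf] at hS
      obtain ⟨A, hA, hact⟩ := hS
      rw [hact y n, hy n hn, map_zero]
    -- the diagonal blocks of T
    set B : ℕ → (H →L[ℂ] H) := fun j => (evalCLM j) ∘L T ∘L (singleCLM j) with hB
    have hTsingle : ∀ (j : ℕ) (a : H), T (lp.single 2 j a) = lp.single 2 j (B j a) := by
      intro j a
      have hmem : (lp.single 2 j a : lp (fun _ : ℕ => H) 2) ∈ coordSub j :=
        fun n hn => single_ne hn a
      have h2 := hKinv j _ hmem
      apply lp.ext
      funext n
      by_cases h : n = j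
      · subst h
        rw [single_self]
        rfl
      · rw [h2 n h, single_ne h]
    -- T leaves each graph subspace invariant
    have hGinv : ∀ V ∈ Set.centralizer (𝒜 : Set (H →L[ℂ] H)), ∀ j : ℕ,
        ∀ x ∈ graphSub V j, T x ∈ graphSub V j := by
      intro V hV j
      haveI := (graphSub_closed (H := H) V j).completeSpace_coe
      intro x hx
      refine mem_of_inv _ T (hT _ (projCLM_mem_latSet _ _ ?_)) hx
      intro S hS y hy
      rw [hinf] at hS
      obtain ⟨A, hA, hact⟩ := hS
      obtain ⟨hy1, hy2⟩ := hy
      refine ⟨?_, fun n hn0 hnj => ?_⟩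
      · rw [hact y j, hact y 0, hy1]
        have hAV := Set.mem_centralizer_iff.mp hV A (SetLike.mem_coe.mpr hA)
        calc A (V ((y : ∀ _ : ℕ, H) 0)) = (A * V) ((y : ∀ _ : ℕ, H) 0) := rfl
          _ = (V * A) ((y : ∀ _ : ℕ, H) 0) := by rw [hAV]
          _ = V (A ((y : ∀ _ : ℕ, H) 0)) := rfl
      · rw [hact y n, hy2 n hn0 hnj, map_zero]
    -- commutation relations
    have hBV : ∀ V ∈ Set.centralizer (𝒜 : Set (H →L[ℂ] H)), ∀ j : ℕ, j ≠ 0 →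
        ∀ a : H, B j (V a) = V (B 0 a) := by
      intro V hV j hj a
      set ξ : lp (fun _ : ℕ => H) 2 := lp.single 2 0 a + lp.single 2 j (V a) with hξdef
      have hξ : ξ ∈ graphSub V j := by
        refine ⟨?_, fun n hn0 hnj => ?_⟩
        · simp only [hξdef, lp.coeFn_add, Pi.add_apply]
          rw [single_ne hj a, single_self, single_self, single_ne (Ne.symm hj) (V a)]
          simp
        · simp only [hξdef, lp.coeFn_add, Pi.add_apply]
          rw [single_ne hn0 a, single_ne hnj (V a), add_zero]
      have hTξ := hGinv V hV j ξ hξ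
      have hTξ_eq : T ξ = lp.single 2 0 (B 0 a) + lp.single 2 j (B j (V a)) := by
        rw [hξdef, map_add, hTsingle 0 a, hTsingle j (V a)]
      obtain ⟨h1, _⟩ := hTξ
      rw [hTξ_eq] at h1
      simp only [lp.coeFn_add, Pi.add_apply] at h1
      rw [single_ne hj (B 0 a), single_self, single_self, single_ne (Ne.symm hj) (B j (V a)),
        zero_add, add_zero] at h1
      exact h1
    have hBeq : ∀ j : ℕ, B j = B 0 := by
      intro j
      rcases eq_or_ne j 0 with rfl | hj
      · rfl
      · ext a
        have := hBV 1 Set.one_mem_centralizer j hj a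
        simpa using this
    -- B 0 lies in the double commutant, hence in 𝒜
    have hB0 : B 0 ∈ 𝒜 := by
      have hcc := 𝒜.centralizer_centralizer
      rw [← SetLike.mem_coe, ← hcc]
      intro V hV
      ext a
      have h1 := hBV V hV 1 one_ne_zero a
      rw [hBeq 1] at h1
      simpa [mul_apply] using h1.symm
    -- conclude T is the amplification of B 0
    rw [hinf]
    refine ⟨B 0, hB0, ?_⟩
    intro x n
    have h1 : HasSum (fun j : ℕ => (lp.single 2 j ((x : ∀ _ : ℕ, H) j) : lp (fun _ : ℕ => H) 2)) x :=
      lp.hasSum_single (by norm_num) x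
    have h2 := h1.mapL T
    have h3 : HasSum (fun j : ℕ => (lp.single 2 j (B 0 ((x : ∀ _ : ℕ, H) j)) :
        lp (fun _ : ℕ => H) 2)) (T x) := by
      have : (fun j : ℕ => T (lp.single 2 j ((x : ∀ _ : ℕ, H) j)))
          = fun j : ℕ => (lp.single 2 j (B 0 ((x : ∀ _ : ℕ, H) j)) : lp (fun _ : ℕ => H) 2) := by
        funext j
        rw [hTsingle j _, hBeq j]
      rwa [this] at h2
    set y : lp (fun _ : ℕ => H) 2 := ⟨fun n => B 0 ((x : ∀ _ : ℕ, H) n), memℓp_comp (B 0) x⟩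
      with hy
    have h4 : HasSum (fun j : ℕ => (lp.single 2 j ((y : ∀ _ : ℕ, H) j) :
        lp (fun _ : ℕ => H) 2)) y := lp.hasSum_single (by norm_num) y
    have h5 : T x = y := h3.unique h4
    rw [h5]
  · intro T hT L hL
    exact hL.2.2 T hT

end
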